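/- Let ρ : ℝ^d → ℝ be a nonnegative radially symmetric function with compact support and finite p-th moment, and let 1 < p < ∞. Then for every u ∈ W^{1,p}(ℝ^d) and every n > 0, setting ρ_n(x) = n^d ρ(nx), one has n^p ∫_{ℝ^d} ∫_{ℝ^d} ρ_n(x−y) |u(x)−u(y)|^p dx dy ≤ (∫_{ℝ^d} ρ(z)|z|^p dz) · ∫_{ℝ^d} |∇u(x)|^p dx. -/

import Mathlib

open MeasureTheory

lemma my_ofReal_integral_le {α : Type*} [MeasurableSpace α] (μ : Measure α) (g : α → ℝ)
    (hg : ∀ x, 0 ≤ g x) :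
    ENNReal.ofReal (∫ x, g x ∂μ) ≤ ∫⁻ x, ENNReal.ofReal (g x) ∂μ := by
  calc ENNReal.ofReal (∫ x, g x ∂μ) ≤ ‖∫ x, g x ∂μ‖ₑ := by
        rw [Real.enorm_eq_ofReal_abs]; exact ENNReal.ofReal_le_ofReal (le_abs_self _)
    _ ≤ ∫⁻ x, ‖g x‖ₑ ∂μ := enorm_integral_le_lintegral_enorm _
    _ = ∫⁻ x, ENNReal.ofReal (g x) ∂μ := by
        refine lintegral_congr fun x => ?_
        rw [Real.enorm_eq_ofReal_abs, abs_of_nonneg (hg x)]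

lemma my_jensen {α : Type*} [MeasurableSpace α] (μ : Measure α) [IsProbabilityMeasure μ]
    {p : ℝ} (hp : 1 < p) (f : α → ENNReal) (hf : AEMeasurable f μ) :
    (∫⁻ x, f x ∂μ) ^ p ≤ ∫⁻ x, (f x) ^ p ∂μ := by
  have hpq : p.HolderConjugate (p / (p - 1)) := .conjExponent hp
  have h := ENNReal.lintegral_mul_le_Lp_mul_Lq μ hpq hf aemeasurable_const (g := fun _ => 1)
  simp only [Pi.mul_apply, mul_one, ENNReal.one_rpow, lintegral_const, measure_univ, one_mul] at h
  have h2 : (∫⁻ x, f x ∂μ) ^ p ≤ ((∫⁻ x, f x ^ p ∂μ) ^ (1 / p)) ^ p :=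
    ENNReal.rpow_le_rpow h (by positivity)
  rwa [← ENNReal.rpow_mul, one_div_mul_cancel (by positivity), ENNReal.rpow_one] at h2

lemma my_pointwise (d : ℕ) (p : ℝ) (hp : 1 < p)
    (u : EuclideanSpace ℝ (Fin d) → ℝ) (hu : Differentiable ℝ u)
    (x y : EuclideanSpace ℝ (Fin d)) :
    ENNReal.ofReal (|u x - u y| ^ p) ≤ ENNReal.ofReal (‖x - y‖ ^ p) *
      ∫⁻ s in Set.Ioc (0:ℝ) 1, ENNReal.ofReal (‖fderiv ℝ u (y + s • (x - y))‖ ^ p) := by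
  haveI : IsProbabilityMeasure (volume.restrict (Set.Ioc (0:ℝ) 1)) := by constructor; simp
  set z := x - y with hz
  set h : ℝ → ℝ := fun s => ‖fderiv ℝ u (y + s • z)‖ with hh
  have hh_nonneg : ∀ s, 0 ≤ h s := fun s => norm_nonneg _
  have hh_meas : Measurable h := by
    exact ((measurable_fderiv ℝ u).norm).comp (by fun_prop)
  set T := ∫⁻ s in Set.Ioc (0:ℝ) 1, ENNReal.ofReal (h s ^ p) with hT
  by_cases hxy : x = y
  · subst hxy
    simp [Real.zero_rpow (by positivity : p ≠ 0)]
  · have hz0 : z ≠ 0 := sub_ne_zero.2 hxy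
    have hznorm : 0 < ‖z‖ := norm_pos_iff.2 hz0
    by_cases hTtop : T = ⊤
    · rw [hTtop, ENNReal.mul_top]
      · exact le_top
      · simp only [ne_eq, ENNReal.ofReal_eq_zero, not_le]
        positivity
    · have hT1 : ∫⁻ s in Set.Ioc (0:ℝ) 1, ENNReal.ofReal (h s) ≤ 1 + T := by
        calc ∫⁻ s in Set.Ioc (0:ℝ) 1, ENNReal.ofReal (h s)
            ≤ ∫⁻ s in Set.Ioc (0:ℝ) 1, (1 + ENNReal.ofReal (h s ^ p)) := by
              refine lintegral_mono fun s => ?_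
              rcases le_or_gt (h s) 1 with hs | hs
              · exact le_add_right (by simpa using ENNReal.ofReal_le_ofReal hs)
              · refine le_add_left (ENNReal.ofReal_le_ofReal ?_)
                calc h s = h s ^ (1:ℝ) := (Real.rpow_one _).symm
                  _ ≤ h s ^ p := Real.rpow_le_rpow_of_exponent_le hs.le hp.le
          _ = 1 + T := by
              rw [lintegral_add_left measurable_const]
              simp [hT]
      have hTfin : T < ⊤ := lt_top_iff_ne_top.2 hTtop
      have hIfin : ∫⁻ s in Set.Ioc (0:ℝ) 1, ENNReal.ofReal (h s) < ⊤ :=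
        hT1.trans_lt (by simpa using ENNReal.add_lt_top.2 ⟨ENNReal.one_lt_top, hTfin⟩)
      have hint_h : IntegrableOn h (Set.Ioc (0:ℝ) 1) := by
        refine ⟨hh_meas.aestronglyMeasurable, ?_⟩
        rw [hasFiniteIntegral_iff_ofReal (Filter.Eventually.of_forall hh_nonneg)]
        exact hIfin
      have hφmeas : Measurable fun s : ℝ => (fderiv ℝ u (y + s • z)) z := by
        exact (measurable_fderiv_apply_const ℝ u z).comp (by fun_prop)
      have hint_φ : IntervalIntegrable (fun s => (fderiv ℝ u (y + s • z)) z) volume 0 1 := by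
        rw [intervalIntegrable_iff_integrableOn_Ioc_of_le zero_le_one]
        refine Integrable.mono' (hint_h.mul_const ‖z‖) hφmeas.aestronglyMeasurable
          (Filter.Eventually.of_forall fun s => ?_)
        exact (fderiv ℝ u (y + s • z)).le_opNorm z
      have hderiv : ∀ s ∈ Set.uIcc (0:ℝ) 1,
          HasDerivAt (fun t => u (y + t • z)) ((fderiv ℝ u (y + s • z)) z) s := by
        intro s _
        have h1 : HasDerivAt (fun t : ℝ => y + t • z) z s := by
          simpa using ((hasDerivAt_id s).smul_const z).const_add y
        exact (hu (y + s • z)).hasFDerivAt.comp_hasDerivAt s h1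
      have key : ∫ s in (0:ℝ)..1, (fderiv ℝ u (y + s • z)) z = u x - u y := by
        rw [intervalIntegral.integral_eq_sub_of_hasDerivAt hderiv hint_φ]
        simp [hz]
      have hint_hz : IntervalIntegrable (fun s => h s * ‖z‖) volume 0 1 := by
        rw [intervalIntegrable_iff_integrableOn_Ioc_of_le zero_le_one]
        exact hint_h.mul_const _
      have hbound : |u x - u y| ≤ ‖z‖ * ∫ s in Set.Ioc (0:ℝ) 1, h s := by
        rw [← key]
        calc |∫ s in (0:ℝ)..1, (fderiv ℝ u (y + s • z)) z|
            ≤ ∫ s in (0:ℝ)..1, |(fderiv ℝ u (y + s • z)) z| :=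
              intervalIntegral.abs_integral_le_integral_abs zero_le_one
          _ ≤ ∫ s in (0:ℝ)..1, h s * ‖z‖ := by
              refine intervalIntegral.integral_mono_on zero_le_one ?_ hint_hz
                (fun s _ => ?_)
              · rw [intervalIntegrable_iff_integrableOn_Ioc_of_le zero_le_one]
                exact ⟨hφmeas.abs.aestronglyMeasurable,
                  ((hint_h.mul_const ‖z‖).mono' hφmeas.abs.aestronglyMeasurable
                    (Filter.Eventually.of_forall fun s => by
                      simpa using (fderiv ℝ u (y + s • z)).le_opNorm z)).hasFiniteIntegral⟩
              · simpa [abs_of_nonneg] using (fderiv ℝ u (y + s • z)).le_opNorm z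
          _ = ‖z‖ * ∫ s in Set.Ioc (0:ℝ) 1, h s := by
              rw [intervalIntegral.integral_of_le zero_le_one, integral_mul_const, mul_comm]
      set A := ∫ s in Set.Ioc (0:ℝ) 1, h s with hA
      have hA_nonneg : 0 ≤ A := integral_nonneg fun s => hh_nonneg s
      have h1 : |u x - u y| ^ p ≤ (‖z‖ * A) ^ p :=
        Real.rpow_le_rpow (abs_nonneg _) hbound (le_of_lt (lt_trans zero_lt_one hp))
      have hAp : ENNReal.ofReal (A ^ p) ≤ T := by
        have e1 : ENNReal.ofReal (A ^ p) = (ENNReal.ofReal A) ^ p :=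
          (ENNReal.ofReal_rpow_of_nonneg hA_nonneg (by positivity)).symm
        rw [e1]
        have e2 : ENNReal.ofReal A ≤ ∫⁻ s in Set.Ioc (0:ℝ) 1, ENNReal.ofReal (h s) :=
          my_ofReal_integral_le _ _ hh_nonneg
        calc (ENNReal.ofReal A) ^ p
            ≤ (∫⁻ s in Set.Ioc (0:ℝ) 1, ENNReal.ofReal (h s)) ^ p :=
              ENNReal.rpow_le_rpow e2 (by positivity)
          _ ≤ ∫⁻ s in Set.Ioc (0:ℝ) 1, (ENNReal.ofReal (h s)) ^ p :=
              my_jensen _ hp _ (hh_meas.ennreal_ofReal.aemeasurable)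
          _ = T := by
              refine lintegral_congr fun s => ?_
              exact (ENNReal.ofReal_rpow_of_nonneg (hh_nonneg s) (by positivity))
      calc ENNReal.ofReal (|u x - u y| ^ p) ≤ ENNReal.ofReal ((‖z‖ * A) ^ p) :=
            ENNReal.ofReal_le_ofReal h1
        _ = ENNReal.ofReal (‖z‖ ^ p) * ENNReal.ofReal (A ^ p) := by
            rw [Real.mul_rpow hznorm.le hA_nonneg, ENNReal.ofReal_mul (by positivity)]
        _ ≤ ENNReal.ofReal (‖z‖ ^ p) * T := by gcongr

set_option maxHeartbeats 2000000 in
/-- nonlocal seminorm bounded by the p-th moment of ρ times the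
Dirichlet energy, for W^{1,p}(ℝ^d) functions. -/
theorem stmt_0 (d : ℕ) (hd : 0 < d) (p : ℝ) (hp : 1 < p)
    (ρ : EuclideanSpace ℝ (Fin d) → ℝ)
    (hρ_nonneg : ∀ x, 0 ≤ ρ x)
    (hρ_radial : ∀ x y : EuclideanSpace ℝ (Fin d), ‖x‖ = ‖y‖ → ρ x = ρ y)
    (hρ_supp : HasCompactSupport ρ)
    (hρ_mom : Integrable (fun z => ρ z * ‖z‖ ^ p))
    (u : EuclideanSpace ℝ (Fin d) → ℝ)
    (hu_diff : Differentiable ℝ u)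
    (hu_Lp : MemLp u (ENNReal.ofReal p))
    (hu_grad : MemLp (fun x => ‖fderiv ℝ u x‖) (ENNReal.ofReal p))
    (n : ℝ) (hn : 0 < n) :
    n ^ p * ∫ x, ∫ y, (n ^ d * ρ (n • (x - y))) * |u x - u y| ^ p ≤
      (∫ z, ρ z * ‖z‖ ^ p) * ∫ x, ‖fderiv ℝ u x‖ ^ p := by
  classical
  haveI : Nonempty (Fin d) := ⟨⟨0, hd⟩⟩
  haveI : IsProbabilityMeasure (volume.restrict (Set.Ioc (0:ℝ) 1)) := by constructor; simp
  have hp0 : (0:ℝ) < p := lt_trans zero_lt_one hp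
  obtain ⟨D, hD⟩ : ∃ D : EuclideanSpace ℝ (Fin d) → ℝ, D = fun w => ‖fderiv ℝ u w‖ := ⟨_, rfl⟩
  have hD_meas : Measurable D := by rw [hD]; exact (measurable_fderiv ℝ u).norm
  have hD_nonneg : ∀ w, 0 ≤ D w := by simp only [hD]; exact fun w => norm_nonneg _
  obtain ⟨G, hG⟩ : ∃ G : EuclideanSpace ℝ (Fin d) → ENNReal, G = fun w => ENNReal.ofReal (D w ^ p) := ⟨_, rfl⟩
  have hG_meas : Measurable G := by
    rw [hG]
    apply Measurable.ennreal_ofReal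
    fun_prop
  obtain ⟨K, hK⟩ : ∃ K : ENNReal, K = ∫⁻ w, G w := ⟨_, rfl⟩
  -- K = ofReal of the Dirichlet energy
  have hDp_int : Integrable (fun w => D w ^ p) := by
    have := hu_grad.integrable_norm_rpow (by simp [hp0]) (by simp)
    simp only [hD]
    simpa [ENNReal.toReal_ofReal hp0.le, abs_of_nonneg (norm_nonneg _)] using this
  have hK_eq : K = ENNReal.ofReal (∫ w, D w ^ p) := by
    rw [hK]
    simp only [hG]
    rw [← ofReal_integral_eq_lintegral_ofReal hDp_int
      (Filter.Eventually.of_forall fun w => Real.rpow_nonneg (hD_nonneg w) p)]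
  -- measurable version of ρ
  obtain ⟨g0, hg0_meas, hg0_ae⟩ :
      ∃ g0 : EuclideanSpace ℝ (Fin d) → ℝ, Measurable g0 ∧ (fun z => ρ z * ‖z‖ ^ p) =ᵐ[volume] g0 := by
    rcases hρ_mom.1.aemeasurable with h
    exact ⟨h.mk _, h.measurable_mk, h.ae_eq_mk⟩
  obtain ⟨ρ', hρ'⟩ : ∃ ρ' : EuclideanSpace ℝ (Fin d) → ℝ, ρ' = fun z => max (g0 z / ‖z‖ ^ p) 0 := ⟨_, rfl⟩
  have hρ'_meas : Measurable ρ' := by rw [hρ']; fun_prop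
  have hρ'_nonneg : ∀ z, 0 ≤ ρ' z := by simp only [hρ']; exact fun z => le_max_right _ _
  have hρ'_ae : ρ' =ᵐ[volume] ρ := by
    have h0 : (volume : Measure (EuclideanSpace ℝ (Fin d))) {(0 : EuclideanSpace ℝ (Fin d))} = 0 := measure_singleton 0
    have hne : ∀ᵐ z : EuclideanSpace ℝ (Fin d) ∂volume, z ≠ (0 : EuclideanSpace ℝ (Fin d)) := by
      rw [Filter.eventually_iff, mem_ae_iff]
      simpa using h0
    filter_upwards [hg0_ae, hne] with z hz hz0
    have hzn : (0:ℝ) < ‖z‖ := norm_pos_iff.2 hz0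
    simp only [hρ']
    rw [← hz, mul_div_assoc, div_self (by positivity : ‖z‖ ^ p ≠ 0), mul_one]
    exact max_eq_left (hρ_nonneg z)
  -- main objects
  obtain ⟨F, hF⟩ : ∃ F : EuclideanSpace ℝ (Fin d) → ENNReal, F = fun w =>
    ENNReal.ofReal ((n:ℝ) ^ d) * ENNReal.ofReal (ρ' (n • w)) * ENNReal.ofReal (‖w‖ ^ p) := ⟨_, rfl⟩
  have hF_meas : Measurable F := by
    rw [hF]
    apply Measurable.mul (f := fun w => ENNReal.ofReal ((n:ℝ) ^ d) * ENNReal.ofReal (ρ' (n • w))) (g := fun w => ENNReal.ofReal (‖w‖ ^ p))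
    apply Measurable.mul (f := fun _ => ENNReal.ofReal ((n:ℝ) ^ d)) (g := fun w => ENNReal.ofReal (ρ' (n • w))) measurable_const
    · exact (hρ'_meas.comp (measurable_const_smul n)).ennreal_ofReal
    · apply Measurable.ennreal_ofReal; fun_prop
  obtain ⟨S, hS⟩ : ∃ S : EuclideanSpace ℝ (Fin d) → EuclideanSpace ℝ (Fin d) → ENNReal,
      S = fun x z => ∫⁻ s in Set.Ioc (0:ℝ) 1, G (x + (s - 1) • z) := ⟨_, rfl⟩
  have hS_meas : Measurable (Function.uncurry S) := by
    rw [hS]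
    apply Measurable.lintegral_prod_right (f := fun (q : EuclideanSpace ℝ (Fin d) × EuclideanSpace ℝ (Fin d)) (s : ℝ) => G (q.1 + (s - 1) • q.2))
    apply hG_meas.comp
    fun_prop
  -- pointwise: per-x inner bound
  obtain ⟨Φ, hΦ⟩ : ∃ Φ : EuclideanSpace ℝ (Fin d) → EuclideanSpace ℝ (Fin d) → ℝ, Φ = fun x y => (n ^ d * ρ (n • (x - y))) * |u x - u y| ^ p := ⟨_, rfl⟩
  have hΦ_nonneg : ∀ x y, 0 ≤ Φ x y := by
    simp only [hΦ]
    exact fun x y => mul_nonneg (mul_nonneg (pow_nonneg hn.le d) (hρ_nonneg _))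
      (Real.rpow_nonneg (abs_nonneg _) p)
  have qmp : Measure.QuasiMeasurePreserving
      (fun w : EuclideanSpace ℝ (Fin d) => n • w) volume volume := Measure.quasiMeasurePreserving_smul volume (ne_of_gt hn)
  have step_inner : ∀ x : EuclideanSpace ℝ (Fin d), (∫⁻ y, ENNReal.ofReal (Φ x y)) ≤ ∫⁻ z, F z * S x z := by
    intro x
    have mp := Measure.measurePreserving_sub_left (volume : Measure (EuclideanSpace ℝ (Fin d))) x
    -- a.e. substitution of ρ by ρ'
    have hae : ∀ᵐ y : EuclideanSpace ℝ (Fin d) ∂volume, ρ' (n • (x - y)) = ρ (n • (x - y)) := by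
      have hqmp2 : Measure.QuasiMeasurePreserving (fun y : EuclideanSpace ℝ (Fin d) => n • (x - y)) volume volume :=
        qmp.comp mp.quasiMeasurePreserving
      have hbad : (volume : Measure (EuclideanSpace ℝ (Fin d))) {w : EuclideanSpace ℝ (Fin d) | ¬ ρ' w = ρ w} = 0 := ae_iff.1 hρ'_ae
      have : (volume : Measure (EuclideanSpace ℝ (Fin d))) ((fun y : EuclideanSpace ℝ (Fin d) => n • (x - y)) ⁻¹' {w : EuclideanSpace ℝ (Fin d) | ¬ ρ' w = ρ w}) = 0 :=
        hqmp2.preimage_null hbad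
      rw [Filter.eventually_iff, mem_ae_iff]
      simpa [Set.preimage, Set.compl_setOf] using this
    calc (∫⁻ y, ENNReal.ofReal (Φ x y))
        ≤ ∫⁻ y, ENNReal.ofReal ((n:ℝ) ^ d) * ENNReal.ofReal (ρ (n • (x - y))) *
            (ENNReal.ofReal (‖x - y‖ ^ p) *
              ∫⁻ s in Set.Ioc (0:ℝ) 1, G (y + s • (x - y))) := by
          refine lintegral_mono fun y => ?_
          simp only [hΦ, hG, hD]
          rw [ENNReal.ofReal_mul (mul_nonneg (pow_nonneg hn.le d) (hρ_nonneg _)),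
            ENNReal.ofReal_mul (pow_nonneg hn.le d)]
          exact mul_le_mul_right (my_pointwise d p hp u hu_diff x y) _
      _ = ∫⁻ y, (F (x - y)) * S x (x - y) := by
          refine lintegral_congr_ae ?_
          filter_upwards [hae] with y hy
          simp only [hF, hS, ← hy]
          have harg : ∀ s : ℝ, y + s • (x - y) = x + (s - 1) • (x - y) := by
            intro s
            rw [sub_smul, one_smul]
            abel
          simp_rw [harg]
          ring
      _ = ∫⁻ z, F z * S x z := by
          have hm1 : Measurable fun z : EuclideanSpace ℝ (Fin d) => S x z :=
            hS_meas.comp (measurable_const.prodMk measurable_id)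
          exact mp.lintegral_comp (f := fun z => F z * S x z) (hF_meas.mul hm1)
  -- the double bound
  have step_double :
      (∫⁻ x, ∫⁻ y, ENNReal.ofReal (Φ x y)) ≤ (∫⁻ z, F z) * K := by
    have hSx_meas : ∀ z, Measurable fun x => S x z := fun z =>
      hS_meas.comp (measurable_id.prodMk measurable_const)
    have hswap : (∫⁻ x, ∫⁻ z, F z * S x z) = ∫⁻ z, ∫⁻ x, F z * S x z := by
      apply lintegral_lintegral_swap
      exact ((hF_meas.comp measurable_snd).mul
        (hS_meas.comp (measurable_fst.prodMk measurable_snd))).aemeasurable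
    have hSint : ∀ z : EuclideanSpace ℝ (Fin d), (∫⁻ x, S x z) = K := by
      intro z
      simp only [hS]
      have : (∫⁻ x : EuclideanSpace ℝ (Fin d), ∫⁻ s in Set.Ioc (0:ℝ) 1, G (x + (s - 1) • z)) =
          ∫⁻ s in Set.Ioc (0:ℝ) 1, ∫⁻ x : EuclideanSpace ℝ (Fin d), G (x + (s - 1) • z) := by
        apply lintegral_lintegral_swap
        exact (hG_meas.comp (by fun_prop :
          Measurable fun q : EuclideanSpace ℝ (Fin d) × ℝ => q.1 + (q.2 - 1) • z)).aemeasurable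
      rw [this]
      have heq : ∀ s : ℝ, (∫⁻ x : EuclideanSpace ℝ (Fin d), G (x + (s - 1) • z)) = K := fun s =>
        (lintegral_add_right_eq_self G ((s - 1) • z)).trans hK.symm
      simp_rw [heq]
      simp
    calc (∫⁻ x, ∫⁻ y, ENNReal.ofReal (Φ x y)) ≤ ∫⁻ x, ∫⁻ z, F z * S x z :=
          lintegral_mono step_inner
      _ = ∫⁻ z, ∫⁻ x, F z * S x z := hswap
      _ = ∫⁻ z, F z * ∫⁻ x, S x z := by
          refine lintegral_congr fun z => ?_
          rw [lintegral_const_mul _ (hSx_meas z)]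
      _ = (∫⁻ z, F z) * K := by
          simp_rw [hSint]
          rw [lintegral_mul_const _ hF_meas]
  -- scaling identity
  have hfr : Module.finrank ℝ (EuclideanSpace ℝ (Fin d)) = d := finrank_euclideanSpace_fin
  obtain ⟨M, hM⟩ : ∃ M : ENNReal, M = ∫⁻ w, ENNReal.ofReal (ρ' w * ‖w‖ ^ p) := ⟨_, rfl⟩
  have step_scale : ENNReal.ofReal (n ^ p) * ∫⁻ z, F z = M := by
    have hptw : ∀ z : EuclideanSpace ℝ (Fin d), ENNReal.ofReal (n ^ p) * F z =
        ENNReal.ofReal ((n:ℝ) ^ d) * ENNReal.ofReal (ρ' (n • z) * ‖n • z‖ ^ p) := by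
      intro z
      simp only [hF]
      rw [ENNReal.ofReal_mul (hρ'_nonneg _), norm_smul, Real.norm_eq_abs, abs_of_pos hn,
        Real.mul_rpow hn.le (norm_nonneg _), ENNReal.ofReal_mul (by positivity)]
      ring
    rw [← lintegral_const_mul _ hF_meas]
    simp_rw [hptw]
    have hgm : Measurable fun z : EuclideanSpace ℝ (Fin d) =>
        ENNReal.ofReal (ρ' (n • z) * ‖n • z‖ ^ p) := by
      apply Measurable.ennreal_ofReal
      apply Measurable.mul (f := fun z => ρ' (n • z)) (g := fun z => ‖n • z‖ ^ p)
      · exact hρ'_meas.comp (measurable_const_smul n)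
      · fun_prop
    rw [lintegral_const_mul _ hgm]
    have hmap : (∫⁻ z : EuclideanSpace ℝ (Fin d), ENNReal.ofReal (ρ' (n • z) * ‖n • z‖ ^ p)) =
        ENNReal.ofReal |((n:ℝ) ^ Module.finrank ℝ (EuclideanSpace ℝ (Fin d)))⁻¹| * M := by
      have hg : Measurable fun w : EuclideanSpace ℝ (Fin d) => ENNReal.ofReal (ρ' w * ‖w‖ ^ p) := by
        apply Measurable.ennreal_ofReal
        apply Measurable.mul (g := fun w => ‖w‖ ^ p) hρ'_meas
        fun_prop
      rw [hM, ← smul_eq_mul, ← lintegral_smul_measure, ← Measure.map_addHaar_smul volume (ne_of_gt hn),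
        lintegral_map hg (measurable_const_smul n)]
    rw [hmap, hfr, ← mul_assoc, ← ENNReal.ofReal_mul (by positivity)]
    have : (n:ℝ) ^ d * |((n:ℝ) ^ d)⁻¹| = 1 := by
      rw [abs_of_pos (by positivity)]
      field_simp
    rw [this, ENNReal.ofReal_one, one_mul]
  -- M equals ofReal of the moment
  have hM_eq : M = ENNReal.ofReal (∫ z, ρ z * ‖z‖ ^ p) := by
    have : M = ∫⁻ w, ENNReal.ofReal (ρ w * ‖w‖ ^ p) := by
      rw [hM]
      refine lintegral_congr_ae ?_
      filter_upwards [hρ'_ae] with w hw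
      rw [hw]
    rw [this, ← ofReal_integral_eq_lintegral_ofReal hρ_mom
      (Filter.Eventually.of_forall fun w => by have := hρ_nonneg w; positivity)]
  -- final real-side assembly
  have hRρ : 0 ≤ ∫ z, ρ z * ‖z‖ ^ p :=
    integral_nonneg fun z => by have := hρ_nonneg z; positivity
  have hRD : 0 ≤ ∫ w, D w ^ p := integral_nonneg fun w => Real.rpow_nonneg (hD_nonneg w) p
  have hA_nonneg : 0 ≤ ∫ x, ∫ y, Φ x y :=
    integral_nonneg fun x => integral_nonneg fun y => hΦ_nonneg x y
  have hofA : ENNReal.ofReal (∫ x, ∫ y, Φ x y) ≤ ∫⁻ x, ∫⁻ y, ENNReal.ofReal (Φ x y) := by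
    refine (my_ofReal_integral_le volume _ fun x =>
      integral_nonneg fun y => hΦ_nonneg x y).trans ?_
    exact lintegral_mono fun x => my_ofReal_integral_le volume _ (hΦ_nonneg x)
  have final : ENNReal.ofReal (n ^ p * ∫ x, ∫ y, Φ x y) ≤
      ENNReal.ofReal ((∫ z, ρ z * ‖z‖ ^ p) * ∫ w, D w ^ p) := by
    calc ENNReal.ofReal (n ^ p * ∫ x, ∫ y, Φ x y)
        = ENNReal.ofReal (n ^ p) * ENNReal.ofReal (∫ x, ∫ y, Φ x y) :=
          ENNReal.ofReal_mul (by positivity)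
      _ ≤ ENNReal.ofReal (n ^ p) * ((∫⁻ z, F z) * K) := by
          exact mul_le_mul_right (hofA.trans step_double) _
      _ = (ENNReal.ofReal (n ^ p) * ∫⁻ z, F z) * K := by ring
      _ = M * K := by rw [step_scale]
      _ = ENNReal.ofReal ((∫ z, ρ z * ‖z‖ ^ p) * ∫ w, D w ^ p) := by
          rw [hM_eq, hK_eq, ← ENNReal.ofReal_mul hRρ]
  have hfin := (ENNReal.ofReal_le_ofReal_iff (by positivity)).1 final
  simpa only [hΦ, hD] using hfin
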